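/- Fix L ≥ 2, θ ∈ [0,π], k ≥ 1, and a square Q(κ) of the grid D_1. For a grid square Q(η) ∈ D_k, define V(θ,η,κ) = L^{2k} ∫_ℝ |ℓ(θ,s) ∩ Q(η)|·|ℓ(θ,s) ∩ Q(κ)| ds and Err(θ,η,κ) = sup over t with ℓ(θ,t) ∩ Q(η) ≠ ∅ of | |ℓ(θ,t) ∩ Q(κ)| - V(θ,η,κ) |. Then the average over all η ∈ D_k of Err(θ,η,κ) is at most C·L^{-k}, with C depending only on L. -/

import Mathlib

open MeasureTheory

/-- Orthogonal projection in direction `θ`: `ℓ(θ,t) = proj θ ⁻¹ {t}` is the line in direction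
`(cos θ, sin θ)` through `t·(-sin θ, cos θ)`. -/
noncomputable def proj (θ : ℝ) (p : ℝ × ℝ) : ℝ := -p.1 * Real.sin θ + p.2 * Real.cos θ

/-- The line `ℓ(θ,t) = proj_θ⁻¹(t)`. -/
def lineSet (θ t : ℝ) : Set (ℝ × ℝ) := {p | proj θ p = t}

/-- Length (1-dimensional Lebesgue measure) of `ℓ(θ,t) ∩ K`, computed via the unit-speed
parametrization `u ↦ t·(-sin θ, cos θ) + u·(cos θ, sin θ)` of the line `ℓ(θ,t)`. -/
noncomputable def lineLen (θ t : ℝ) (K : Set (ℝ × ℝ)) : ENNReal :=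
  volume {u : ℝ |
    (t * (-Real.sin θ) + u * Real.cos θ, t * Real.cos θ + u * Real.sin θ) ∈ K}

/-- The closed grid square of `D_k` (the `L^k × L^k` grid of `[0,1]²`) with lower-left corner
`(a/L^k, b/L^k)`. -/
def gridSq (L k a b : ℕ) : Set (ℝ × ℝ) :=
  Set.Icc ((a : ℝ) / (L : ℝ) ^ k) (((a : ℝ) + 1) / (L : ℝ) ^ k) ×ˢ
    Set.Icc ((b : ℝ) / (L : ℝ) ^ k) (((b : ℝ) + 1) / (L : ℝ) ^ k)

/-- `V(θ,η,κ) = L^{2k} ∫ |ℓ(θ,s) ∩ Q(η)|·|ℓ(θ,s) ∩ Q(κ)| ds`, where `Q(η)` is the square of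
`D_k` with lower-left corner `(aη/L^k, bη/L^k)` and `Q(κ) ∈ D_1`. -/
noncomputable def Vval (L k : ℕ) (θ : ℝ) (aη bη aκ bκ : ℕ) : ℝ :=
  (L : ℝ) ^ (2 * k) * ∫ s : ℝ,
    (lineLen θ s (gridSq L k aη bη)).toReal * (lineLen θ s (gridSq L 1 aκ bκ)).toReal

/-- `Err(θ,η,κ) = sup_{t : ℓ(θ,t) ∩ Q(η) ≠ ∅} | |ℓ(θ,t) ∩ Q(κ)| - V(θ,η,κ) |`. -/
noncomputable def ErrVal (L k : ℕ) (θ : ℝ) (aη bη aκ bκ : ℕ) : ℝ :=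
  sSup {x : ℝ | ∃ t : ℝ, (lineSet θ t ∩ gridSq L k aη bη).Nonempty ∧
    x = |(lineLen θ t (gridSq L 1 aκ bκ)).toReal - Vval L k θ aη bη aκ bκ|}


-- Auxiliary development --

open Real in
/-- The rotation-reflection used to parametrize lines. -/
noncomputable def rmapL (θ : ℝ) : (ℝ × ℝ) →ₗ[ℝ] (ℝ × ℝ) where
  toFun p := (-p.1 * Real.sin θ + p.2 * Real.cos θ, p.1 * Real.cos θ + p.2 * Real.sin θ)
  map_add' p q := by ext <;> simp <;> ring
  map_smul' r p := by ext <;> simp <;> ring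

lemma rmap_invol (θ : ℝ) : (rmapL θ).comp (rmapL θ) = LinearMap.id := by
  ext p <;> simp [rmapL] <;> nlinarith [Real.sin_sq_add_cos_sq θ]

lemma rmap_det (θ : ℝ) : ENNReal.ofReal |((rmapL θ).det)⁻¹| = 1 ∧ (rmapL θ).det ≠ 0 := by
  have h : (rmapL θ).det * (rmapL θ).det = 1 := by
    rw [← LinearMap.det_comp, rmap_invol, LinearMap.det_id]
  rcases mul_self_eq_one_iff.1 h with h1 | h1 <;> rw [h1] <;> norm_num

lemma lineLen_eq (θ t : ℝ) (K : Set (ℝ × ℝ)) :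
    lineLen θ t K = volume (Prod.mk t ⁻¹' ((rmapL θ) ⁻¹' K)) := by
  unfold lineLen
  congr 1
  ext u
  simp only [Set.mem_setOf_eq, Set.mem_preimage, rmapL, LinearMap.coe_mk, AddHom.coe_mk]
  constructor <;> intro h <;> convert h using 2 <;> ring

lemma measurable_rmap (θ : ℝ) : Measurable (rmapL θ) := by
  have : Continuous (rmapL θ) := LinearMap.continuous_of_finiteDimensional _
  exact this.measurable

lemma measurable_lineLen (θ : ℝ) {K : Set (ℝ × ℝ)} (hK : MeasurableSet K) :
    Measurable (fun t => lineLen θ t K) := by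
  simp only [lineLen_eq]
  exact measurable_measure_prodMk_left (measurable_rmap θ hK)

lemma lintegral_lineLen (θ : ℝ) {K : Set (ℝ × ℝ)} (hK : MeasurableSet K) :
    ∫⁻ t, lineLen θ t K = volume K := by
  simp only [lineLen_eq]
  rw [← Measure.prod_apply (measurable_rmap θ hK), ← Measure.volume_eq_prod,
    Measure.addHaar_preimage_linearMap volume (rmap_det θ).2 K, (rmap_det θ).1, one_mul]

def unitSq : Set (ℝ × ℝ) := Set.Icc (0:ℝ) 1 ×ˢ Set.Icc (0:ℝ) 1

lemma gridSq_subset_unit {L k a b : ℕ} (hL : 1 ≤ L) (ha : a < L ^ k) (hb : b < L ^ k) :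
    gridSq L k a b ⊆ unitSq := by
  have hLk : (0:ℝ) < (L:ℝ) ^ k := by positivity
  rintro ⟨x, y⟩ ⟨⟨hx1, hx2⟩, ⟨hy1, hy2⟩⟩
  have ha' : ((a:ℝ) + 1) ≤ (L:ℝ) ^ k := by
    have : (a + 1 : ℕ) ≤ L ^ k := ha
    exact_mod_cast this
  have hb' : ((b:ℝ) + 1) ≤ (L:ℝ) ^ k := by
    have : (b + 1 : ℕ) ≤ L ^ k := hb
    exact_mod_cast this
  refine ⟨⟨le_trans (by positivity) hx1, ?_⟩, ⟨le_trans (by positivity) hy1, ?_⟩⟩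
  · exact le_trans hx2 (by rw [div_le_one hLk]; exact ha')
  · exact le_trans hy2 (by rw [div_le_one hLk]; exact hb')

lemma measurableSet_gridSq (L k a b : ℕ) : MeasurableSet (gridSq L k a b) :=
  (measurableSet_Icc).prod (measurableSet_Icc)

lemma convex_gridSq (L k a b : ℕ) : Convex ℝ (gridSq L k a b) :=
  (convex_Icc _ _).prod (convex_Icc _ _)

lemma isClosed_gridSq (L k a b : ℕ) : IsClosed (gridSq L k a b) :=
  (isClosed_Icc).prod (isClosed_Icc)

lemma sect_subset {θ t : ℝ} {K : Set (ℝ × ℝ)} (hK : K ⊆ unitSq) :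
    {u : ℝ | (t * (-Real.sin θ) + u * Real.cos θ, t * Real.cos θ + u * Real.sin θ) ∈ K}
      ⊆ Set.Icc (-2 : ℝ) 2 := by
  intro u hu
  obtain ⟨⟨hx1, hx2⟩, ⟨hy1, hy2⟩⟩ := hK hu
  simp only at hx1 hx2 hy1 hy2
  have hsc := Real.sin_sq_add_cos_sq θ
  have hu' : u = (t * (-Real.sin θ) + u * Real.cos θ) * Real.cos θ
      + (t * Real.cos θ + u * Real.sin θ) * Real.sin θ := by
    linear_combination (-u) * hsc
  have h1 : |(t * (-Real.sin θ) + u * Real.cos θ) * Real.cos θ| ≤ 1 := by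
    rw [abs_mul]
    exact mul_le_one₀ (abs_le.2 ⟨by linarith, by linarith⟩) (abs_nonneg _) (Real.abs_cos_le_one θ)
  have h2 : |(t * Real.cos θ + u * Real.sin θ) * Real.sin θ| ≤ 1 := by
    rw [abs_mul]
    exact mul_le_one₀ (abs_le.2 ⟨by linarith, by linarith⟩) (abs_nonneg _) (Real.abs_sin_le_one θ)
  have h3 : |u| ≤ 2 := by
    rw [hu']
    exact le_trans (abs_add_le _ _) (by linarith)
  exact Set.mem_Icc.2 (abs_le.1 h3)

lemma lineLen_le_four {θ t : ℝ} {K : Set (ℝ × ℝ)} (hK : K ⊆ unitSq) :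
    lineLen θ t K ≤ ENNReal.ofReal 4 := by
  calc lineLen θ t K ≤ volume (Set.Icc (-2:ℝ) 2) := measure_mono (sect_subset hK)
    _ = ENNReal.ofReal 4 := by rw [Real.volume_Icc]; norm_num

lemma lineLen_ne_top {θ t : ℝ} {K : Set (ℝ × ℝ)} (hK : K ⊆ unitSq) :
    lineLen θ t K ≠ ⊤ :=
  ne_top_of_le_ne_top (by simp) (lineLen_le_four hK)

lemma lineLen_toReal_le_four {θ t : ℝ} {K : Set (ℝ × ℝ)} (hK : K ⊆ unitSq) :
    (lineLen θ t K).toReal ≤ 4 := by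
  have h := ENNReal.toReal_mono (b := ENNReal.ofReal 4) (by simp)
    (lineLen_le_four (θ := θ) (t := t) hK)
  rwa [ENNReal.toReal_ofReal (by norm_num)] at h

lemma quasi (θ : ℝ) {K : Set (ℝ × ℝ)} (hconv : Convex ℝ K) (hcl : IsClosed K)
    (hsub : K ⊆ unitSq) {t₁ t t₂ : ℝ} (h1 : t₁ ≤ t) (h2 : t ≤ t₂) :
    min ((lineLen θ t₁ K).toReal) ((lineLen θ t₂ K).toReal) ≤ (lineLen θ t K).toReal := by
  set S : ℝ → Set ℝ := fun r => {u : ℝ |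
    (r * (-Real.sin θ) + u * Real.cos θ, r * Real.cos θ + u * Real.sin θ) ∈ K} with hS
  have hlen : ∀ r, lineLen θ r K = volume (S r) := fun r => rfl
  have hf0 : ∀ r, 0 ≤ (lineLen θ r K).toReal := fun r => ENNReal.toReal_nonneg
  -- key convexity fact
  have key : ∀ r₁ r₂ u₁ u₂ lam mu, 0 ≤ lam → 0 ≤ mu → lam + mu = 1 →
      u₁ ∈ S r₁ → u₂ ∈ S r₂ → lam * u₁ + mu * u₂ ∈ S (lam * r₁ + mu * r₂) := by
    intro r₁ r₂ u₁ u₂ lam mu hlam hmu hlm hu₁ hu₂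
    have := hconv hu₁ hu₂ hlam hmu hlm
    simp only [hS, Set.mem_setOf_eq] at *
    convert this using 2 <;> simp [Prod.smul_mk, Prod.mk_add_mk] <;> ring
  by_cases hS₁ : (S t₁).Nonempty
  swap
  · rw [Set.not_nonempty_iff_eq_empty] at hS₁
    have : (lineLen θ t₁ K).toReal = 0 := by rw [hlen, hS₁]; simp
    exact le_trans (min_le_left _ _) (this ▸ hf0 t)
  by_cases hS₂ : (S t₂).Nonempty
  swap
  · rw [Set.not_nonempty_iff_eq_empty] at hS₂
    have : (lineLen θ t₂ K).toReal = 0 := by rw [hlen, hS₂]; simp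
    exact le_trans (min_le_right _ _) (this ▸ hf0 t)
  have hScl : ∀ r, IsClosed (S r) := by
    intro r
    have hc : Continuous (fun u : ℝ =>
        (r * (-Real.sin θ) + u * Real.cos θ, r * Real.cos θ + u * Real.sin θ)) := by
      fun_prop
    exact hcl.preimage hc
  have hSsub : ∀ r, S r ⊆ Set.Icc (-2:ℝ) 2 := fun r => sect_subset hsub
  have hbdd₁ : BddBelow (S t₁) ∧ BddAbove (S t₁) :=
    ⟨BddBelow.mono (hSsub t₁) bddBelow_Icc, BddAbove.mono (hSsub t₁) bddAbove_Icc⟩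
  have hbdd₂ : BddBelow (S t₂) ∧ BddAbove (S t₂) :=
    ⟨BddBelow.mono (hSsub t₂) bddBelow_Icc, BddAbove.mono (hSsub t₂) bddAbove_Icc⟩
  set i₁ := sInf (S t₁); set j₁ := sSup (S t₁)
  set i₂ := sInf (S t₂); set j₂ := sSup (S t₂)
  have hi₁ : i₁ ∈ S t₁ := (hScl t₁).csInf_mem hS₁ hbdd₁.1
  have hj₁ : j₁ ∈ S t₁ := (hScl t₁).csSup_mem hS₁ hbdd₁.2
  have hi₂ : i₂ ∈ S t₂ := (hScl t₂).csInf_mem hS₂ hbdd₂.1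
  have hj₂ : j₂ ∈ S t₂ := (hScl t₂).csSup_mem hS₂ hbdd₂.2
  have hij₁ : i₁ ≤ j₁ := csInf_le_csSup hS₁ hbdd₁.1 hbdd₁.2
  have hij₂ : i₂ ≤ j₂ := csInf_le_csSup hS₂ hbdd₂.1 hbdd₂.2
  -- upper bounds on f t₁, f t₂
  have hup₁ : (lineLen θ t₁ K).toReal ≤ j₁ - i₁ := by
    rw [hlen t₁]
    have hsub' : S t₁ ⊆ Set.Icc i₁ j₁ := fun u hu =>
      ⟨csInf_le hbdd₁.1 hu, le_csSup hbdd₁.2 hu⟩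
    have := measure_mono (μ := (volume : Measure ℝ)) hsub'
    rw [Real.volume_Icc] at this
    have h' := ENNReal.toReal_mono ENNReal.ofReal_ne_top this
    rwa [ENNReal.toReal_ofReal (by linarith)] at h'
  have hup₂ : (lineLen θ t₂ K).toReal ≤ j₂ - i₂ := by
    rw [hlen t₂]
    have hsub' : S t₂ ⊆ Set.Icc i₂ j₂ := fun u hu =>
      ⟨csInf_le hbdd₂.1 hu, le_csSup hbdd₂.2 hu⟩
    have := measure_mono (μ := (volume : Measure ℝ)) hsub'
    rw [Real.volume_Icc] at this
    have h' := ENNReal.toReal_mono ENNReal.ofReal_ne_top this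
    rwa [ENNReal.toReal_ofReal (by linarith)] at h'
  rcases eq_or_lt_of_le (le_trans h1 h2) with heq | hlt
  · -- t₁ = t₂, so t = t₁
    have ht : t = t₁ := le_antisymm (heq ▸ h2) h1
    rw [ht]
    exact min_le_left _ _
  · set lam := (t₂ - t) / (t₂ - t₁) with hlamdef
    set mu := (t - t₁) / (t₂ - t₁) with hmudef
    have hd : (0:ℝ) < t₂ - t₁ := by linarith
    have hlam : 0 ≤ lam := div_nonneg (by linarith) (by linarith)
    have hmu : 0 ≤ mu := div_nonneg (by linarith) (by linarith)
    have hlm : lam + mu = 1 := by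
      rw [hlamdef, hmudef]
      field_simp
      ring
    have ht : t = lam * t₁ + mu * t₂ := by
      rw [hlamdef, hmudef]
      field_simp
      ring
    have ha : lam * i₁ + mu * i₂ ∈ S t := by
      rw [ht]; exact key _ _ _ _ _ _ hlam hmu hlm hi₁ hi₂
    have hb : lam * j₁ + mu * j₂ ∈ S t := by
      rw [ht]; exact key _ _ _ _ _ _ hlam hmu hlm hj₁ hj₂
    have hSconv : Convex ℝ (S t) := by
      intro u₁ hu₁ u₂ hu₂ lam' mu' hlam' hmu' hlm'
      have := key t t u₁ u₂ lam' mu' hlam' hmu' hlm' hu₁ hu₂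
      rwa [show lam' * t + mu' * t = t by linear_combination t * hlm'] at this
    have hIcc : Set.Icc (lam * i₁ + mu * i₂) (lam * j₁ + mu * j₂) ⊆ S t :=
      hSconv.ordConnected.out ha hb
    have hvol : ENNReal.ofReal ((lam * j₁ + mu * j₂) - (lam * i₁ + mu * i₂))
        ≤ volume (S t) := by
      have := measure_mono (μ := (volume : Measure ℝ)) hIcc
      rwa [Real.volume_Icc] at this
    have hlow : (lam * j₁ + mu * j₂) - (lam * i₁ + mu * i₂) ≤ (lineLen θ t K).toReal := by
      rw [hlen t]
      exact (ENNReal.ofReal_le_iff_le_toReal (lineLen_ne_top (θ := θ) (t := t) hsub)).1 hvol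
    have hmin : min ((lineLen θ t₁ K).toReal) ((lineLen θ t₂ K).toReal)
        ≤ lam * (j₁ - i₁) + mu * (j₂ - i₂) := by
      have m1 := min_le_left ((lineLen θ t₁ K).toReal) ((lineLen θ t₂ K).toReal)
      have m2 := min_le_right ((lineLen θ t₁ K).toReal) ((lineLen θ t₂ K).toReal)
      nlinarith [hup₁, hup₂]
    nlinarith [hlow, hmin]


lemma sum_sub_shift (f : ℕ → ℝ) (h0 : ∀ n, 0 ≤ f n) (h4 : ∀ n, f n ≤ 4) (N : ℕ) :
    ∑ a ∈ Finset.range N, (f a - f (a + 3)) ≤ 12 := by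
  rw [Finset.sum_sub_distrib]
  have h : ∑ a ∈ Finset.range N, f (a + 3) = (∑ a ∈ Finset.range (3 + N), f a) - (f 0 + f 1 + f 2) := by
    rw [Finset.sum_range_add]
    have : ∑ x ∈ Finset.range 3, f x = f 0 + f 1 + f 2 := by
      simp [Finset.sum_range_succ]
    rw [this]
    have : ∑ x ∈ Finset.range N, f (3 + x) = ∑ x ∈ Finset.range N, f (x + 3) := by
      apply Finset.sum_congr rfl; intro x _; rw [Nat.add_comm]
    rw [this]; ring
  rw [h]
  have h2 : ∑ a ∈ Finset.range (3 + N), f a = (∑ a ∈ Finset.range N, f a) + (f N + f (N+1) + f (N+2)) := by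
    have : 3 + N = N + 1 + 1 + 1 := by ring
    rw [this, Finset.sum_range_succ, Finset.sum_range_succ, Finset.sum_range_succ]
    ring_nf
  rw [h2]
  have := h0 N; have := h0 (N+1); have := h0 (N+2)
  have := h4 0; have := h4 1; have := h4 2
  linarith

lemma sum_shift_sub (f : ℕ → ℝ) (h0 : ∀ n, 0 ≤ f n) (h4 : ∀ n, f n ≤ 4) (N : ℕ) :
    ∑ a ∈ Finset.range N, (f (a + 3) - f a) ≤ 12 := by
  have := sum_sub_shift (fun n => 4 - f n) (fun n => by linarith [h4 n]) (fun n => by linarith [h0 n]) N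
  have e : ∑ a ∈ Finset.range N, (4 - f a - (4 - f (a+3))) = ∑ a ∈ Finset.range N, (f (a+3) - f a) := by
    apply Finset.sum_congr rfl; intro x _; ring
  linarith [e ▸ this]

/-- `f(t) = |ℓ(θ,t) ∩ K|` as a real number. -/
noncomputable def flen (θ : ℝ) (K : Set (ℝ × ℝ)) (t : ℝ) : ℝ := (lineLen θ t K).toReal

/-- Nondecreasing envelope of `flen`. -/
noncomputable def Fup (θ : ℝ) (K : Set (ℝ × ℝ)) (t : ℝ) : ℝ := sSup (flen θ K '' Set.Iic t)

/-- Nonincreasing envelope of `flen`. -/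
noncomputable def Fdn (θ : ℝ) (K : Set (ℝ × ℝ)) (t : ℝ) : ℝ := sSup (flen θ K '' Set.Ici t)

lemma bddAbove_flen_image {θ : ℝ} {K : Set (ℝ × ℝ)} (hK : K ⊆ unitSq) (s : Set ℝ) :
    BddAbove (flen θ K '' s) := by
  refine ⟨4, ?_⟩
  rintro _ ⟨t, _, rfl⟩
  exact lineLen_toReal_le_four hK

lemma flen_nonneg (θ : ℝ) (K : Set (ℝ × ℝ)) (t : ℝ) : 0 ≤ flen θ K t :=
  ENNReal.toReal_nonneg

lemma le_Fup {θ : ℝ} {K : Set (ℝ × ℝ)} (hK : K ⊆ unitSq) {t t' : ℝ} (h : t ≤ t') :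
    flen θ K t ≤ Fup θ K t' :=
  le_csSup (bddAbove_flen_image hK _) ⟨t, h, rfl⟩

lemma le_Fdn {θ : ℝ} {K : Set (ℝ × ℝ)} (hK : K ⊆ unitSq) {t t' : ℝ} (h : t' ≤ t) :
    flen θ K t ≤ Fdn θ K t' :=
  le_csSup (bddAbove_flen_image hK _) ⟨t, h, rfl⟩

lemma Fup_mono {θ : ℝ} {K : Set (ℝ × ℝ)} (hK : K ⊆ unitSq) {t t' : ℝ} (h : t ≤ t') :
    Fup θ K t ≤ Fup θ K t' :=
  csSup_le_csSup (bddAbove_flen_image hK _) (⟨flen θ K t, t, le_refl t, rfl⟩)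
    (Set.image_mono (Set.Iic_subset_Iic.2 h))

lemma Fdn_anti {θ : ℝ} {K : Set (ℝ × ℝ)} (hK : K ⊆ unitSq) {t t' : ℝ} (h : t ≤ t') :
    Fdn θ K t' ≤ Fdn θ K t :=
  csSup_le_csSup (bddAbove_flen_image hK _) (⟨flen θ K t', t', le_refl t', rfl⟩)
    (Set.image_mono (Set.Ici_subset_Ici.2 h))

lemma Fup_nonneg {θ : ℝ} {K : Set (ℝ × ℝ)} (hK : K ⊆ unitSq) (t : ℝ) :
    0 ≤ Fup θ K t :=
  le_trans (flen_nonneg θ K t) (le_Fup hK (le_refl t))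

lemma Fdn_nonneg {θ : ℝ} {K : Set (ℝ × ℝ)} (hK : K ⊆ unitSq) (t : ℝ) :
    0 ≤ Fdn θ K t :=
  le_trans (flen_nonneg θ K t) (le_Fdn hK (le_refl t))

lemma Fup_le_four {θ : ℝ} {K : Set (ℝ × ℝ)} (hK : K ⊆ unitSq) (t : ℝ) :
    Fup θ K t ≤ 4 := by
  apply Real.sSup_le
  · rintro _ ⟨t', _, rfl⟩
    exact lineLen_toReal_le_four hK
  · norm_num

lemma Fdn_le_four {θ : ℝ} {K : Set (ℝ × ℝ)} (hK : K ⊆ unitSq) (t : ℝ) :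
    Fdn θ K t ≤ 4 := by
  apply Real.sSup_le
  · rintro _ ⟨t', _, rfl⟩
    exact lineLen_toReal_le_four hK
  · norm_num

lemma min_envelope_le {θ : ℝ} {K : Set (ℝ × ℝ)} (hconv : Convex ℝ K) (hcl : IsClosed K)
    (hK : K ⊆ unitSq) {α t β : ℝ} (hα : α ≤ t) (hβ : t ≤ β) :
    min (Fup θ K α) (Fdn θ K β) ≤ flen θ K t := by
  by_contra hcon
  push_neg at hcon
  rw [lt_min_iff] at hcon
  obtain ⟨h1, h2⟩ := hcon
  simp only [Fup] at h1
  simp only [Fdn] at h2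
  obtain ⟨_, ⟨t₁, ht₁, rfl⟩, hlt₁⟩ := exists_lt_of_lt_csSup
    (Set.nonempty_Iic.image _) h1
  obtain ⟨_, ⟨t₂, ht₂, rfl⟩, hlt₂⟩ := exists_lt_of_lt_csSup
    (Set.nonempty_Ici.image _) h2
  have := quasi θ hconv hcl hK (le_trans ht₁ hα) (le_trans hβ ht₂)
  have hmin : flen θ K t < min (flen θ K t₁) (flen θ K t₂) := lt_min hlt₁ hlt₂
  simp only [flen] at hmin
  exact absurd this (not_le.2 hmin)

/-- Lower endpoint of the projection interval of `gridSq L k a b`. -/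
noncomputable def alo (L k : ℕ) (θ : ℝ) (a b : ℕ) : ℝ :=
  -(((a:ℝ) + 1) / (L:ℝ) ^ k) * Real.sin θ +
    (if 0 ≤ Real.cos θ then ((b:ℝ) / (L:ℝ) ^ k) * Real.cos θ
     else (((b:ℝ) + 1) / (L:ℝ) ^ k) * Real.cos θ)

/-- Upper endpoint of the projection interval of `gridSq L k a b`. -/
noncomputable def bhi (L k : ℕ) (θ : ℝ) (a b : ℕ) : ℝ :=
  -((a:ℝ) / (L:ℝ) ^ k) * Real.sin θ +
    (if 0 ≤ Real.cos θ then (((b:ℝ) + 1) / (L:ℝ) ^ k) * Real.cos θ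
     else ((b:ℝ) / (L:ℝ) ^ k) * Real.cos θ)

lemma proj_bounds {L k a b : ℕ} {θ : ℝ} (hX : (0:ℝ) < (L:ℝ) ^ k) (hs : 0 ≤ Real.sin θ)
    {p : ℝ × ℝ} (hp : p ∈ gridSq L k a b) :
    alo L k θ a b ≤ proj θ p ∧ proj θ p ≤ bhi L k θ a b := by
  obtain ⟨⟨hx1, hx2⟩, ⟨hy1, hy2⟩⟩ := hp
  unfold alo bhi proj
  have A1 : -(((a:ℝ) + 1) / (L:ℝ) ^ k) * Real.sin θ ≤ -p.1 * Real.sin θ :=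
    mul_le_mul_of_nonneg_right (neg_le_neg hx2) hs
  have A2 : -p.1 * Real.sin θ ≤ -((a:ℝ) / (L:ℝ) ^ k) * Real.sin θ :=
    mul_le_mul_of_nonneg_right (neg_le_neg hx1) hs
  rcases le_or_gt 0 (Real.cos θ) with hc | hc
  · rw [if_pos hc, if_pos hc]
    have B1 : ((b:ℝ) / (L:ℝ) ^ k) * Real.cos θ ≤ p.2 * Real.cos θ :=
      mul_le_mul_of_nonneg_right hy1 hc
    have B2 : p.2 * Real.cos θ ≤ (((b:ℝ) + 1) / (L:ℝ) ^ k) * Real.cos θ :=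
      mul_le_mul_of_nonneg_right hy2 hc
    exact ⟨by linarith, by linarith⟩
  · rw [if_neg (not_le.2 hc), if_neg (not_le.2 hc)]
    have B1 : (((b:ℝ) + 1) / (L:ℝ) ^ k) * Real.cos θ ≤ p.2 * Real.cos θ :=
      mul_le_mul_of_nonpos_right hy2 hc.le
    have B2 : p.2 * Real.cos θ ≤ ((b:ℝ) / (L:ℝ) ^ k) * Real.cos θ :=
      mul_le_mul_of_nonpos_right hy1 hc.le
    exact ⟨by linarith, by linarith⟩

lemma proj_param (θ t u : ℝ) :
    proj θ (t * (-Real.sin θ) + u * Real.cos θ, t * Real.cos θ + u * Real.sin θ) = t := by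
  simp only [proj]
  linear_combination t * Real.sin_sq_add_cos_sq θ

lemma alo_le_bhi {L k a b : ℕ} {θ : ℝ} (hX : (0:ℝ) < (L:ℝ) ^ k) (hs : 0 ≤ Real.sin θ) :
    alo L k θ a b ≤ bhi L k θ a b := by
  unfold alo bhi
  have hXi : (0:ℝ) ≤ 1 / (L:ℝ) ^ k := by positivity
  rcases le_or_gt 0 (Real.cos θ) with hc | hc
  · rw [if_pos hc, if_pos hc, ← sub_nonneg]
    have key : (0:ℝ) ≤ (Real.sin θ + Real.cos θ) * (1 / (L:ℝ) ^ k) :=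
      mul_nonneg (by linarith) hXi
    convert key using 1
    ring
  · rw [if_neg (not_le.2 hc), if_neg (not_le.2 hc), ← sub_nonneg]
    have key : (0:ℝ) ≤ (Real.sin θ - Real.cos θ) * (1 / (L:ℝ) ^ k) :=
      mul_nonneg (by linarith) hXi
    convert key using 1
    ring

lemma shiftA {L k a b : ℕ} {θ : ℝ} (hX : (0:ℝ) < (L:ℝ) ^ k) (hs7 : 7/10 ≤ Real.sin θ) :
    bhi L k θ (a + 3) b ≤ alo L k θ a b := by
  unfold alo bhi
  have hXi : (0:ℝ) ≤ 1 / (L:ℝ) ^ k := by positivity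
  push_cast
  rcases le_or_gt 0 (Real.cos θ) with hc | hc
  · rw [if_pos hc, if_pos hc, ← sub_nonneg]
    have key : (0:ℝ) ≤ (2 * Real.sin θ - Real.cos θ) * (1 / (L:ℝ) ^ k) :=
      mul_nonneg (by linarith [Real.cos_le_one θ]) hXi
    convert key using 1
    ring
  · rw [if_neg (not_le.2 hc), if_neg (not_le.2 hc), ← sub_nonneg]
    have key : (0:ℝ) ≤ (2 * Real.sin θ + Real.cos θ) * (1 / (L:ℝ) ^ k) :=
      mul_nonneg (by linarith [Real.neg_one_le_cos θ]) hXi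
    convert key using 1
    ring

lemma shiftB1 {L k a b : ℕ} {θ : ℝ} (hX : (0:ℝ) < (L:ℝ) ^ k) (hs : Real.sin θ ≤ 1)
    (hc7 : 7/10 ≤ Real.cos θ) :
    bhi L k θ a b ≤ alo L k θ a (b + 3) := by
  unfold alo bhi
  have hXi : (0:ℝ) ≤ 1 / (L:ℝ) ^ k := by positivity
  have hc : (0:ℝ) ≤ Real.cos θ := by linarith
  push_cast
  rw [if_pos hc, if_pos hc, ← sub_nonneg]
  have key : (0:ℝ) ≤ (2 * Real.cos θ - Real.sin θ) * (1 / (L:ℝ) ^ k) :=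
    mul_nonneg (by linarith) hXi
  convert key using 1
  ring

lemma shiftB2 {L k a b : ℕ} {θ : ℝ} (hX : (0:ℝ) < (L:ℝ) ^ k) (hs : Real.sin θ ≤ 1)
    (hc7 : Real.cos θ ≤ -(7/10)) :
    bhi L k θ a (b + 3) ≤ alo L k θ a b := by
  unfold alo bhi
  have hXi : (0:ℝ) ≤ 1 / (L:ℝ) ^ k := by positivity
  have hc : ¬ (0:ℝ) ≤ Real.cos θ := by push_neg; linarith
  push_cast
  rw [if_neg hc, if_neg hc, ← sub_nonneg]
  have key : (0:ℝ) ≤ (-2 * Real.cos θ - Real.sin θ) * (1 / (L:ℝ) ^ k) :=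
    mul_nonneg (by linarith) hXi
  convert key using 1
  ring

lemma err_le (L k : ℕ) (θ : ℝ) (a b aκ bκ : ℕ) (hL : 2 ≤ L) (ha : a < L ^ k) (hb : b < L ^ k)
    (haκ : aκ < L) (hbκ : bκ < L) (hs : 0 ≤ Real.sin θ) :
    ErrVal L k θ a b aκ bκ ≤
      (Fup θ (gridSq L 1 aκ bκ) (bhi L k θ a b) - Fup θ (gridSq L 1 aκ bκ) (alo L k θ a b))
      + (Fdn θ (gridSq L 1 aκ bκ) (alo L k θ a b) - Fdn θ (gridSq L 1 aκ bκ) (bhi L k θ a b)) := by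
  have hL1 : 1 ≤ L := le_trans one_le_two hL
  have hX : (0:ℝ) < (L:ℝ) ^ k := by
    have : (0:ℝ) < (L:ℝ) := by exact_mod_cast Nat.lt_of_lt_of_le Nat.zero_lt_two hL
    positivity
  have hsubκ : gridSq L 1 aκ bκ ⊆ unitSq :=
    gridSq_subset_unit hL1 (by simpa [pow_one] using haκ) (by simpa [pow_one] using hbκ)
  have hsubη : gridSq L k a b ⊆ unitSq := gridSq_subset_unit hL1 ha hb
  have hconvκ : Convex ℝ (gridSq L 1 aκ bκ) := convex_gridSq L 1 aκ bκ
  have hclκ : IsClosed (gridSq L 1 aκ bκ) := isClosed_gridSq L 1 aκ bκ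
  have hab : alo L k θ a b ≤ bhi L k θ a b := alo_le_bhi hX hs
  have hFupm : Fup θ (gridSq L 1 aκ bκ) (alo L k θ a b) ≤ Fup θ (gridSq L 1 aκ bκ) (bhi L k θ a b) :=
    Fup_mono hsubκ hab
  have hFdnm : Fdn θ (gridSq L 1 aκ bκ) (bhi L k θ a b) ≤ Fdn θ (gridSq L 1 aκ bκ) (alo L k θ a b) :=
    Fdn_anti hsubκ hab
  apply Real.sSup_le _ (by linarith)
  rintro x ⟨t, ⟨p, hp⟩, rfl⟩
  have hpt : proj θ p = t := hp.1
  have hbounds := proj_bounds hX hs hp.2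
  rw [hpt] at hbounds
  obtain ⟨htA, htB⟩ := hbounds
  set U := min (Fup θ (gridSq L 1 aκ bκ) (bhi L k θ a b)) (Fdn θ (gridSq L 1 aκ bκ) (alo L k θ a b)) with hUdef
  set l := min (Fup θ (gridSq L 1 aκ bκ) (alo L k θ a b)) (Fdn θ (gridSq L 1 aκ bκ) (bhi L k θ a b)) with hldef
  have hfU : flen θ (gridSq L 1 aκ bκ) t ≤ U := le_min (le_Fup hsubκ htB) (le_Fdn hsubκ htA)
  have hfl : l ≤ flen θ (gridSq L 1 aκ bκ) t := min_envelope_le hconvκ hclκ hsubκ htA htB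
  -- integral facts
  have hGmeas : Measurable (fun s => lineLen θ s (gridSq L k a b)) :=
    measurable_lineLen θ (measurableSet_gridSq L k a b)
  have hvolQ : volume (gridSq L k a b)
      = ENNReal.ofReal (1/(L:ℝ)^k) * ENNReal.ofReal (1/(L:ℝ)^k) := by
    unfold gridSq
    rw [show (volume : Measure (ℝ×ℝ)) = (volume : Measure ℝ).prod volume from
      Measure.volume_eq_prod ℝ ℝ, Measure.prod_prod, Real.volume_Icc, Real.volume_Icc,
      show ((a:ℝ)+1)/(L:ℝ)^k - (a:ℝ)/(L:ℝ)^k = 1/(L:ℝ)^k from by ring,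
      show ((b:ℝ)+1)/(L:ℝ)^k - (b:ℝ)/(L:ℝ)^k = 1/(L:ℝ)^k from by ring]
  have hlintQ : ∫⁻ s, lineLen θ s (gridSq L k a b)
      = ENNReal.ofReal (1/(L:ℝ)^k) * ENNReal.ofReal (1/(L:ℝ)^k) := by
    rw [lintegral_lineLen θ (measurableSet_gridSq L k a b), hvolQ]
  have hGne : ∀ s, lineLen θ s (gridSq L k a b) < ⊤ :=
    fun s => lt_top_iff_ne_top.2 (lineLen_ne_top hsubη)
  have hgint : Integrable (fun s => (lineLen θ s (gridSq L k a b)).toReal) := by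
    apply integrable_toReal_of_lintegral_ne_top hGmeas.aemeasurable
    rw [hlintQ]
    exact ENNReal.mul_ne_top ENNReal.ofReal_ne_top ENNReal.ofReal_ne_top
  have hgl : ∫ s, (lineLen θ s (gridSq L k a b)).toReal = 1/(L:ℝ)^k * (1/(L:ℝ)^k) := by
    rw [integral_toReal hGmeas.aemeasurable (Filter.Eventually.of_forall hGne), hlintQ,
      ENNReal.toReal_mul, ENNReal.toReal_ofReal (by positivity)]
  have hsupp : ∀ s, (lineLen θ s (gridSq L k a b)).toReal ≠ 0 →
      alo L k θ a b ≤ s ∧ s ≤ bhi L k θ a b := by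
    intro s hgs
    have hne : lineLen θ s (gridSq L k a b) ≠ 0 := by
      intro h0
      exact hgs (by rw [h0]; simp)
    obtain ⟨u, hu⟩ := nonempty_of_measure_ne_zero hne
    have := proj_bounds hX hs hu
    rwa [proj_param] at this
  have hfmeas : Measurable (flen θ (gridSq L 1 aκ bκ)) :=
    (measurable_lineLen θ (measurableSet_gridSq L 1 aκ bκ)).ennreal_toReal
  have hgmeas : Measurable (fun s => (lineLen θ s (gridSq L k a b)).toReal) :=
    hGmeas.ennreal_toReal
  have hgnn : ∀ s, 0 ≤ (lineLen θ s (gridSq L k a b)).toReal := fun s => ENNReal.toReal_nonneg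
  have hf4 : ∀ s, flen θ (gridSq L 1 aκ bκ) s ≤ 4 := fun s => lineLen_toReal_le_four hsubκ
  have hint1 : Integrable (fun s =>
      (lineLen θ s (gridSq L k a b)).toReal * flen θ (gridSq L 1 aκ bκ) s) := by
    apply Integrable.mono' (hgint.const_mul 4) ((hgmeas.mul hfmeas).aestronglyMeasurable)
    apply Filter.Eventually.of_forall
    intro s
    rw [Real.norm_eq_abs]; simp only [Pi.mul_apply]; rw [abs_of_nonneg (mul_nonneg (hgnn s) (flen_nonneg _ _ _))]
    calc (lineLen θ s (gridSq L k a b)).toReal * flen θ (gridSq L 1 aκ bκ) s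
        ≤ (lineLen θ s (gridSq L k a b)).toReal * 4 :=
          mul_le_mul_of_nonneg_left (hf4 s) (hgnn s)
      _ = 4 * (lineLen θ s (gridSq L k a b)).toReal := mul_comm _ _
  have hptU : ∀ s, (lineLen θ s (gridSq L k a b)).toReal * flen θ (gridSq L 1 aκ bκ) s
      ≤ (lineLen θ s (gridSq L k a b)).toReal * U := by
    intro s
    by_cases hgs : (lineLen θ s (gridSq L k a b)).toReal = 0
    · rw [hgs]; simp
    · obtain ⟨h1, h2⟩ := hsupp s hgs
      exact mul_le_mul_of_nonneg_left (le_min (le_Fup hsubκ h2) (le_Fdn hsubκ h1)) (hgnn s)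
  have hptl : ∀ s, (lineLen θ s (gridSq L k a b)).toReal * l
      ≤ (lineLen θ s (gridSq L k a b)).toReal * flen θ (gridSq L 1 aκ bκ) s := by
    intro s
    by_cases hgs : (lineLen θ s (gridSq L k a b)).toReal = 0
    · rw [hgs]; simp
    · obtain ⟨h1, h2⟩ := hsupp s hgs
      exact mul_le_mul_of_nonneg_left (min_envelope_le hconvκ hclκ hsubκ h1 h2) (hgnn s)
  have hpow : ((L:ℝ)) ^ (2 * k) = ((L:ℝ)^k) * ((L:ℝ)^k) := by rw [two_mul, pow_add]
  have hVle : Vval L k θ a b aκ bκ ≤ U := by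
    unfold Vval
    have hle : ∫ s, (lineLen θ s (gridSq L k a b)).toReal * (lineLen θ s (gridSq L 1 aκ bκ)).toReal
        ≤ (1/(L:ℝ)^k * (1/(L:ℝ)^k)) * U := by
      calc ∫ s, (lineLen θ s (gridSq L k a b)).toReal * (lineLen θ s (gridSq L 1 aκ bκ)).toReal
          ≤ ∫ s, (lineLen θ s (gridSq L k a b)).toReal * U :=
            integral_mono hint1 (hgint.mul_const U) hptU
        _ = (∫ s, (lineLen θ s (gridSq L k a b)).toReal) * U := integral_mul_const U _
        _ = (1/(L:ℝ)^k * (1/(L:ℝ)^k)) * U := by rw [hgl]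
    calc (L:ℝ)^(2*k) * ∫ s, (lineLen θ s (gridSq L k a b)).toReal * (lineLen θ s (gridSq L 1 aκ bκ)).toReal
        ≤ (L:ℝ)^(2*k) * ((1/(L:ℝ)^k * (1/(L:ℝ)^k)) * U) :=
          mul_le_mul_of_nonneg_left hle (by positivity)
      _ = U := by rw [hpow]; field_simp
  have hVge : l ≤ Vval L k θ a b aκ bκ := by
    unfold Vval
    have hle : (1/(L:ℝ)^k * (1/(L:ℝ)^k)) * l
        ≤ ∫ s, (lineLen θ s (gridSq L k a b)).toReal * (lineLen θ s (gridSq L 1 aκ bκ)).toReal := by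
      calc (1/(L:ℝ)^k * (1/(L:ℝ)^k)) * l
          = (∫ s, (lineLen θ s (gridSq L k a b)).toReal) * l := by rw [hgl]
        _ = ∫ s, (lineLen θ s (gridSq L k a b)).toReal * l := (integral_mul_const l _).symm
        _ ≤ ∫ s, (lineLen θ s (gridSq L k a b)).toReal * (lineLen θ s (gridSq L 1 aκ bκ)).toReal :=
            integral_mono (hgint.mul_const l) hint1 hptl
    calc l = (L:ℝ)^(2*k) * ((1/(L:ℝ)^k * (1/(L:ℝ)^k)) * l) := by rw [hpow]; field_simp
      _ ≤ (L:ℝ)^(2*k) * ∫ s, (lineLen θ s (gridSq L k a b)).toReal * (lineLen θ s (gridSq L 1 aκ bκ)).toReal :=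
          mul_le_mul_of_nonneg_left hle (by positivity)
  have habs : |(lineLen θ t (gridSq L 1 aκ bκ)).toReal - Vval L k θ a b aκ bκ| ≤ U - l := by
    have hft : flen θ (gridSq L 1 aκ bκ) t = (lineLen θ t (gridSq L 1 aκ bκ)).toReal := rfl
    rw [← hft]
    apply abs_le.2
    constructor <;> [linarith; linarith]
  have hUl : U - l ≤
      (Fup θ (gridSq L 1 aκ bκ) (bhi L k θ a b) - Fup θ (gridSq L 1 aκ bκ) (alo L k θ a b))
      + (Fdn θ (gridSq L 1 aκ bκ) (alo L k θ a b) - Fdn θ (gridSq L 1 aκ bκ) (bhi L k θ a b)) := by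
    rcases le_total (Fup θ (gridSq L 1 aκ bκ) (alo L k θ a b))
        (Fdn θ (gridSq L 1 aκ bκ) (bhi L k θ a b)) with hm | hm
    · have h1 : l = Fup θ (gridSq L 1 aκ bκ) (alo L k θ a b) := min_eq_left hm
      have h2 : U ≤ Fup θ (gridSq L 1 aκ bκ) (bhi L k θ a b) := min_le_left _ _
      linarith
    · have h1 : l = Fdn θ (gridSq L 1 aκ bκ) (bhi L k θ a b) := min_eq_right hm
      have h2 : U ≤ Fdn θ (gridSq L 1 aκ bκ) (alo L k θ a b) := min_le_right _ _
      linarith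
  linarith

/-- The average of `Err(θ,η,κ)` over all `η ∈ D_k` is at most `C·L^{-k}`, with `C` depending
only on `L`. -/
theorem stmt10 (L : ℕ) (hL : 2 ≤ L) :
    ∃ C > (0 : ℝ), ∀ θ ∈ Set.Icc (0 : ℝ) Real.pi, ∀ k : ℕ, 1 ≤ k →
      ∀ aκ bκ : ℕ, aκ < L → bκ < L →
      ((L : ℝ) ^ (2 * k))⁻¹ *
          ∑ a ∈ Finset.range (L ^ k), ∑ b ∈ Finset.range (L ^ k), ErrVal L k θ a b aκ bκ
        ≤ C * ((L : ℝ) ^ k)⁻¹ := by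
  refine ⟨24, by norm_num, ?_⟩
  intro θ hθ k hk aκ bκ haκ hbκ
  have hL1 : 1 ≤ L := le_trans one_le_two hL
  have hLpos : (0:ℝ) < (L:ℝ) := by exact_mod_cast Nat.lt_of_lt_of_le Nat.zero_lt_two hL
  have hX : (0:ℝ) < (L:ℝ)^k := by positivity
  have hs : 0 ≤ Real.sin θ := Real.sin_nonneg_of_nonneg_of_le_pi hθ.1 hθ.2
  have hs1 : Real.sin θ ≤ 1 := Real.sin_le_one θ
  have hsubκ : gridSq L 1 aκ bκ ⊆ unitSq :=
    gridSq_subset_unit hL1 (by simpa [pow_one] using haκ) (by simpa [pow_one] using hbκ)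
  have hstep : ∑ a ∈ Finset.range (L ^ k), ∑ b ∈ Finset.range (L ^ k), ErrVal L k θ a b aκ bκ
      ≤ ∑ a ∈ Finset.range (L ^ k), ∑ b ∈ Finset.range (L ^ k),
        ((Fup θ (gridSq L 1 aκ bκ) (bhi L k θ a b) - Fup θ (gridSq L 1 aκ bκ) (alo L k θ a b))
          + (Fdn θ (gridSq L 1 aκ bκ) (alo L k θ a b) - Fdn θ (gridSq L 1 aκ bκ) (bhi L k θ a b))) := by
    apply Finset.sum_le_sum
    intro a haa
    apply Finset.sum_le_sum
    intro b hbb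
    exact err_le L k θ a b aκ bκ hL (Finset.mem_range.1 haa) (Finset.mem_range.1 hbb) haκ hbκ hs
  have hmain : ∑ a ∈ Finset.range (L ^ k), ∑ b ∈ Finset.range (L ^ k),
        ((Fup θ (gridSq L 1 aκ bκ) (bhi L k θ a b) - Fup θ (gridSq L 1 aκ bκ) (alo L k θ a b))
          + (Fdn θ (gridSq L 1 aκ bκ) (alo L k θ a b) - Fdn θ (gridSq L 1 aκ bκ) (bhi L k θ a b)))
      ≤ 24 * ((L:ℝ)^k) := by
    by_cases hs7 : 7/10 ≤ Real.sin θ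
    · -- sum over a for each fixed b
      have row : ∀ b : ℕ, ∑ a ∈ Finset.range (L ^ k),
          ((Fup θ (gridSq L 1 aκ bκ) (bhi L k θ a b) - Fup θ (gridSq L 1 aκ bκ) (alo L k θ a b))
            + (Fdn θ (gridSq L 1 aκ bκ) (alo L k θ a b) - Fdn θ (gridSq L 1 aκ bκ) (bhi L k θ a b)))
          ≤ 24 := by
        intro b
        have hterm : ∀ a : ℕ,
            ((Fup θ (gridSq L 1 aκ bκ) (bhi L k θ a b) - Fup θ (gridSq L 1 aκ bκ) (alo L k θ a b))
              + (Fdn θ (gridSq L 1 aκ bκ) (alo L k θ a b) - Fdn θ (gridSq L 1 aκ bκ) (bhi L k θ a b)))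
            ≤ ((Fup θ (gridSq L 1 aκ bκ) (bhi L k θ a b) - Fup θ (gridSq L 1 aκ bκ) (bhi L k θ (a+3) b))
              + (Fdn θ (gridSq L 1 aκ bκ) (bhi L k θ (a+3) b) - Fdn θ (gridSq L 1 aκ bκ) (bhi L k θ a b))) := by
          intro a
          have h1 := Fup_mono (θ := θ) hsubκ (shiftA (a := a) (b := b) hX hs7)
          have h2 := Fdn_anti (θ := θ) hsubκ (shiftA (a := a) (b := b) hX hs7)
          linarith
        calc ∑ a ∈ Finset.range (L ^ k),
            ((Fup θ (gridSq L 1 aκ bκ) (bhi L k θ a b) - Fup θ (gridSq L 1 aκ bκ) (alo L k θ a b))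
              + (Fdn θ (gridSq L 1 aκ bκ) (alo L k θ a b) - Fdn θ (gridSq L 1 aκ bκ) (bhi L k θ a b)))
            ≤ ∑ a ∈ Finset.range (L ^ k),
            ((Fup θ (gridSq L 1 aκ bκ) (bhi L k θ a b) - Fup θ (gridSq L 1 aκ bκ) (bhi L k θ (a+3) b))
              + (Fdn θ (gridSq L 1 aκ bκ) (bhi L k θ (a+3) b) - Fdn θ (gridSq L 1 aκ bκ) (bhi L k θ a b))) :=
              Finset.sum_le_sum (fun a _ => hterm a)
          _ = (∑ a ∈ Finset.range (L ^ k),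
                (Fup θ (gridSq L 1 aκ bκ) (bhi L k θ a b) - Fup θ (gridSq L 1 aκ bκ) (bhi L k θ (a+3) b)))
              + (∑ a ∈ Finset.range (L ^ k),
                (Fdn θ (gridSq L 1 aκ bκ) (bhi L k θ (a+3) b) - Fdn θ (gridSq L 1 aκ bκ) (bhi L k θ a b))) := by
              rw [← Finset.sum_add_distrib]
          _ ≤ 12 + 12 := add_le_add
              (sum_sub_shift (fun a => Fup θ (gridSq L 1 aκ bκ) (bhi L k θ a b))
                (fun n => Fup_nonneg hsubκ _) (fun n => Fup_le_four hsubκ _) (L ^ k))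
              (sum_shift_sub (fun a => Fdn θ (gridSq L 1 aκ bκ) (bhi L k θ a b))
                (fun n => Fdn_nonneg hsubκ _) (fun n => Fdn_le_four hsubκ _) (L ^ k))
          _ = 24 := by norm_num
      calc ∑ a ∈ Finset.range (L ^ k), ∑ b ∈ Finset.range (L ^ k),
            ((Fup θ (gridSq L 1 aκ bκ) (bhi L k θ a b) - Fup θ (gridSq L 1 aκ bκ) (alo L k θ a b))
              + (Fdn θ (gridSq L 1 aκ bκ) (alo L k θ a b) - Fdn θ (gridSq L 1 aκ bκ) (bhi L k θ a b)))
          = ∑ b ∈ Finset.range (L ^ k), ∑ a ∈ Finset.range (L ^ k),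
            ((Fup θ (gridSq L 1 aκ bκ) (bhi L k θ a b) - Fup θ (gridSq L 1 aκ bκ) (alo L k θ a b))
              + (Fdn θ (gridSq L 1 aκ bκ) (alo L k θ a b) - Fdn θ (gridSq L 1 aκ bκ) (bhi L k θ a b))) :=
            Finset.sum_comm
        _ ≤ ∑ _b ∈ Finset.range (L ^ k), (24:ℝ) := Finset.sum_le_sum (fun b _ => row b)
        _ = (L ^ k : ℕ) * 24 := by rw [Finset.sum_const, Finset.card_range, nsmul_eq_mul]
        _ = 24 * ((L:ℝ)^k) := by push_cast; ring
    · -- |cos θ| ≥ 7/10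
      have hsin : Real.sin θ < 7/10 := not_le.1 hs7
      have hcos2 : (51:ℝ)/100 ≤ (Real.cos θ)^2 := by
        nlinarith [Real.sin_sq_add_cos_sq θ]
      have row : ∀ a : ℕ, ∑ b ∈ Finset.range (L ^ k),
          ((Fup θ (gridSq L 1 aκ bκ) (bhi L k θ a b) - Fup θ (gridSq L 1 aκ bκ) (alo L k θ a b))
            + (Fdn θ (gridSq L 1 aκ bκ) (alo L k θ a b) - Fdn θ (gridSq L 1 aκ bκ) (bhi L k θ a b)))
          ≤ 24 := by
        intro a
        rcases le_or_gt 0 (Real.cos θ) with hc | hc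
        · have hc7 : 7/10 ≤ Real.cos θ := by nlinarith
          have hterm : ∀ b : ℕ,
              ((Fup θ (gridSq L 1 aκ bκ) (bhi L k θ a b) - Fup θ (gridSq L 1 aκ bκ) (alo L k θ a b))
                + (Fdn θ (gridSq L 1 aκ bκ) (alo L k θ a b) - Fdn θ (gridSq L 1 aκ bκ) (bhi L k θ a b)))
              ≤ ((Fup θ (gridSq L 1 aκ bκ) (alo L k θ a (b+3)) - Fup θ (gridSq L 1 aκ bκ) (alo L k θ a b))
                + (Fdn θ (gridSq L 1 aκ bκ) (alo L k θ a b) - Fdn θ (gridSq L 1 aκ bκ) (alo L k θ a (b+3)))) := by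
            intro b
            have h1 := le_of_eq (rfl : Fup θ (gridSq L 1 aκ bκ) (bhi L k θ a b) = _)
            have h2 := Fup_mono (θ := θ) hsubκ (shiftB1 (a := a) (b := b) hX hs1 hc7)
            have h3 := Fdn_anti (θ := θ) hsubκ (shiftB1 (a := a) (b := b) hX hs1 hc7)
            linarith
          calc ∑ b ∈ Finset.range (L ^ k),
              ((Fup θ (gridSq L 1 aκ bκ) (bhi L k θ a b) - Fup θ (gridSq L 1 aκ bκ) (alo L k θ a b))
                + (Fdn θ (gridSq L 1 aκ bκ) (alo L k θ a b) - Fdn θ (gridSq L 1 aκ bκ) (bhi L k θ a b)))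
              ≤ ∑ b ∈ Finset.range (L ^ k),
              ((Fup θ (gridSq L 1 aκ bκ) (alo L k θ a (b+3)) - Fup θ (gridSq L 1 aκ bκ) (alo L k θ a b))
                + (Fdn θ (gridSq L 1 aκ bκ) (alo L k θ a b) - Fdn θ (gridSq L 1 aκ bκ) (alo L k θ a (b+3)))) :=
                Finset.sum_le_sum (fun b _ => hterm b)
            _ = (∑ b ∈ Finset.range (L ^ k),
                  (Fup θ (gridSq L 1 aκ bκ) (alo L k θ a (b+3)) - Fup θ (gridSq L 1 aκ bκ) (alo L k θ a b)))
                + (∑ b ∈ Finset.range (L ^ k),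
                  (Fdn θ (gridSq L 1 aκ bκ) (alo L k θ a b) - Fdn θ (gridSq L 1 aκ bκ) (alo L k θ a (b+3)))) := by
                rw [← Finset.sum_add_distrib]
            _ ≤ 12 + 12 := add_le_add
                (sum_shift_sub (fun b => Fup θ (gridSq L 1 aκ bκ) (alo L k θ a b))
                  (fun n => Fup_nonneg hsubκ _) (fun n => Fup_le_four hsubκ _) (L ^ k))
                (sum_sub_shift (fun b => Fdn θ (gridSq L 1 aκ bκ) (alo L k θ a b))
                  (fun n => Fdn_nonneg hsubκ _) (fun n => Fdn_le_four hsubκ _) (L ^ k))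
            _ = 24 := by norm_num
        · have hc7 : Real.cos θ ≤ -(7/10) := by nlinarith
          have hterm : ∀ b : ℕ,
              ((Fup θ (gridSq L 1 aκ bκ) (bhi L k θ a b) - Fup θ (gridSq L 1 aκ bκ) (alo L k θ a b))
                + (Fdn θ (gridSq L 1 aκ bκ) (alo L k θ a b) - Fdn θ (gridSq L 1 aκ bκ) (bhi L k θ a b)))
              ≤ ((Fup θ (gridSq L 1 aκ bκ) (bhi L k θ a b) - Fup θ (gridSq L 1 aκ bκ) (bhi L k θ a (b+3)))
                + (Fdn θ (gridSq L 1 aκ bκ) (bhi L k θ a (b+3)) - Fdn θ (gridSq L 1 aκ bκ) (bhi L k θ a b))) := by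
            intro b
            have h2 := Fup_mono (θ := θ) hsubκ (shiftB2 (a := a) (b := b) hX hs1 hc7)
            have h3 := Fdn_anti (θ := θ) hsubκ (shiftB2 (a := a) (b := b) hX hs1 hc7)
            linarith
          calc ∑ b ∈ Finset.range (L ^ k),
              ((Fup θ (gridSq L 1 aκ bκ) (bhi L k θ a b) - Fup θ (gridSq L 1 aκ bκ) (alo L k θ a b))
                + (Fdn θ (gridSq L 1 aκ bκ) (alo L k θ a b) - Fdn θ (gridSq L 1 aκ bκ) (bhi L k θ a b)))
              ≤ ∑ b ∈ Finset.range (L ^ k),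
              ((Fup θ (gridSq L 1 aκ bκ) (bhi L k θ a b) - Fup θ (gridSq L 1 aκ bκ) (bhi L k θ a (b+3)))
                + (Fdn θ (gridSq L 1 aκ bκ) (bhi L k θ a (b+3)) - Fdn θ (gridSq L 1 aκ bκ) (bhi L k θ a b))) :=
                Finset.sum_le_sum (fun b _ => hterm b)
            _ = (∑ b ∈ Finset.range (L ^ k),
                  (Fup θ (gridSq L 1 aκ bκ) (bhi L k θ a b) - Fup θ (gridSq L 1 aκ bκ) (bhi L k θ a (b+3))))
                + (∑ b ∈ Finset.range (L ^ k),
                  (Fdn θ (gridSq L 1 aκ bκ) (bhi L k θ a (b+3)) - Fdn θ (gridSq L 1 aκ bκ) (bhi L k θ a b))) := by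
                rw [← Finset.sum_add_distrib]
            _ ≤ 12 + 12 := add_le_add
                (sum_sub_shift (fun b => Fup θ (gridSq L 1 aκ bκ) (bhi L k θ a b))
                  (fun n => Fup_nonneg hsubκ _) (fun n => Fup_le_four hsubκ _) (L ^ k))
                (sum_shift_sub (fun b => Fdn θ (gridSq L 1 aκ bκ) (bhi L k θ a b))
                  (fun n => Fdn_nonneg hsubκ _) (fun n => Fdn_le_four hsubκ _) (L ^ k))
            _ = 24 := by norm_num
      calc ∑ a ∈ Finset.range (L ^ k), ∑ b ∈ Finset.range (L ^ k),
            ((Fup θ (gridSq L 1 aκ bκ) (bhi L k θ a b) - Fup θ (gridSq L 1 aκ bκ) (alo L k θ a b))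
              + (Fdn θ (gridSq L 1 aκ bκ) (alo L k θ a b) - Fdn θ (gridSq L 1 aκ bκ) (bhi L k θ a b)))
          ≤ ∑ _a ∈ Finset.range (L ^ k), (24:ℝ) := Finset.sum_le_sum (fun a _ => row a)
        _ = (L ^ k : ℕ) * 24 := by rw [Finset.sum_const, Finset.card_range, nsmul_eq_mul]
        _ = 24 * ((L:ℝ)^k) := by push_cast; ring
  have htot : ∑ a ∈ Finset.range (L ^ k), ∑ b ∈ Finset.range (L ^ k), ErrVal L k θ a b aκ bκ
      ≤ 24 * ((L:ℝ)^k) := le_trans hstep hmain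
  have hpow : ((L:ℝ)) ^ (2 * k) = ((L:ℝ)^k) * ((L:ℝ)^k) := by rw [two_mul, pow_add]
  calc ((L : ℝ) ^ (2 * k))⁻¹ *
        ∑ a ∈ Finset.range (L ^ k), ∑ b ∈ Finset.range (L ^ k), ErrVal L k θ a b aκ bκ
      ≤ ((L : ℝ) ^ (2 * k))⁻¹ * (24 * ((L:ℝ)^k)) :=
        mul_le_mul_of_nonneg_left htot (by positivity)
    _ = 24 * ((L : ℝ) ^ k)⁻¹ := by rw [hpow]; field_simp
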